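/- Let r, c, m, p > 0 and 0 < a < 1, and suppose c < 1/(r·(1−a)) (weak cooperation). If 1 < p < 1/a, then the system has a unique interior equilibrium (u*, v*), i.e., a unique pair with u* > 0, v* > 0, r·(1−u*)·(u*−a) = (1+c·v*)·v* and p·u*·(1+c·v*) = 1; moreover a < u* < 1/p. -/

import Mathlib

private lemma uniq_u (r c p a u₁ u₂ : ℝ) (hr : 0 < r) (hc : 0 < c)
    (ha0 : 0 < a) (ha1 : a < 1) (hcr : c * r * (1 - a) < 1) (hp1 : 1 < p)
    (h1a : a < u₁) (h1b : p * u₁ < 1) (h2a : a < u₂) (h2b : p * u₂ < 1)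
    (hf1 : c*r*p^2*u₁^2*(1-u₁)*(u₁-a) + (p*u₁ - 1) = 0)
    (hf2 : c*r*p^2*u₂^2*(1-u₂)*(u₂-a) + (p*u₂ - 1) = 0) : u₁ = u₂ := by
  have hp0 : (0:ℝ) < p := by linarith
  have hu1 : 0 < u₁ := lt_trans ha0 h1a
  have hu2 : 0 < u₂ := lt_trans ha0 h2a
  have hu1' : u₁ < 1 := by nlinarith
  have hu2' : u₂ < 1 := by nlinarith
  have key : (u₂ - u₁) * (p*u₁*u₂ - u₁ - u₂ + c*r*p^2*u₁^2*u₂^2*(u₁+u₂-1-a)) = 0 := by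
    linear_combination u₂^2 * hf1 - u₁^2 * hf2
  have hB : p*u₁*u₂ - u₁ - u₂ + c*r*p^2*u₁^2*u₂^2*(u₁+u₂-1-a) < 0 := by
    have hpos1 : 0 < u₁ * (1 - p*u₂) := mul_pos hu1 (by linarith)
    rcases le_or_gt (u₁ + u₂) (1 + a) with h | h
    · have hnp : c*r*p^2*u₁^2*u₂^2*(u₁+u₂-1-a) ≤ 0 :=
        mul_nonpos_of_nonneg_of_nonpos (by positivity) (by linarith)
      nlinarith
    · have hA : p^2*u₁^2 ≤ 1 := by
        nlinarith [mul_nonneg (by linarith : (0:ℝ) ≤ 1 - p*u₁)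
          (by positivity : (0:ℝ) ≤ 1 + p*u₁)]
      have hpos : (0:ℝ) < c*r*u₂^2 := by positivity
      have hfac : 0 < c*r*u₂^2*(u₁+u₂-1-a) := mul_pos hpos (by linarith)
      have t1 : c*r*u₂^2*(u₁+u₂-1-a) * (p^2*u₁^2) ≤ c*r*u₂^2*(u₁+u₂-1-a) * 1 :=
        mul_le_mul_of_nonneg_left hA hfac.le
      have t2 : c*r*u₂^2*(u₁+u₂-1-a) < c*r*u₂^2*(1-a) :=
        mul_lt_mul_of_pos_left (by linarith) hpos
      have t3 : c*r*u₂^2*(1-a) < u₂ := by nlinarith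
      nlinarith
  rcases mul_eq_zero.mp key with h | h
  · linarith
  · exact absurd h (ne_of_lt hB)

set_option maxHeartbeats 1000000 in
/-- Under weak cooperation `c < 1/(r(1-a))` and `1 < p < 1/a`, the system has a
unique interior equilibrium `(u*, v*)`, and moreover `a < u* < 1/p`. -/
theorem stmt_2 (r c m p a : ℝ) (hr : 0 < r) (hc : 0 < c) (hm : 0 < m)
    (ha0 : 0 < a) (ha1 : a < 1) (hweak : c < 1 / (r * (1 - a)))
    (hp1 : 1 < p) (hpa : p < 1 / a) :
    ∃ u v : ℝ, 0 < u ∧ 0 < v ∧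
      r * (1 - u) * (u - a) = (1 + c * v) * v ∧ p * u * (1 + c * v) = 1 ∧
      a < u ∧ u < 1 / p ∧
      ∀ u' v' : ℝ, 0 < u' → 0 < v' →
        r * (1 - u') * (u' - a) = (1 + c * v') * v' → p * u' * (1 + c * v') = 1 →
        u' = u ∧ v' = v := by
  have hp0 : (0:ℝ) < p := by linarith
  have h1a0 : (0:ℝ) < 1 - a := by linarith
  have hcr : c * r * (1 - a) < 1 := by
    have h := (lt_div_iff₀ (by positivity : (0:ℝ) < r * (1 - a))).mp hweak
    nlinarith
  have hpa1 : p * a < 1 := by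
    have := (lt_div_iff₀ ha0).mp hpa; linarith
  have hap : a < 1 / p := (lt_div_iff₀ hp0).mpr (by linarith)
  have hp1' : 1 / p < 1 := by rw [div_lt_one hp0]; exact hp1
  have hcont : ContinuousOn (fun x : ℝ => c*r*p^2*x^2*(1-x)*(x-a) + (p*x - 1))
      (Set.Icc a (1/p)) := by fun_prop
  have hfa : c*r*p^2*a^2*(1-a)*(a-a) + (p*a - 1) < 0 := by
    simp only [sub_self, mul_zero, zero_add]; linarith
  have hfb : 0 < c*r*p^2*(1/p)^2*(1-(1/p))*((1/p)-a) + (p*(1/p) - 1) := by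
    have h1 : (0:ℝ) < 1 - 1/p := by linarith
    have h2 : (0:ℝ) < 1/p - a := by linarith
    have hpne : p ≠ 0 := ne_of_gt hp0
    have h3 : c*r*p^2*(1/p)^2*(1-(1/p))*((1/p)-a) + (p*(1/p) - 1)
        = c*r*(1 - 1/p)*(1/p - a) := by field_simp; ring
    rw [h3]; positivity
  obtain ⟨u, huI, hfu⟩ := intermediate_value_Ioo hap.le hcont
    (Set.mem_Ioo.mpr ⟨hfa, hfb⟩)
  obtain ⟨hua, hub⟩ := huI
  have hfu' : c*r*p^2*u^2*(1-u)*(u-a) + (p*u - 1) = 0 := hfu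
  have hu0 : 0 < u := lt_trans ha0 hua
  have hpu : p * u < 1 := by
    have := (lt_div_iff₀ hp0).mp hub; linarith
  have hune : u ≠ 0 := ne_of_gt hu0
  have hpne : p ≠ 0 := ne_of_gt hp0
  have hcne : c ≠ 0 := ne_of_gt hc
  set v : ℝ := (1 - p*u)/(c*p*u) with hv
  have hv0 : 0 < v := div_pos (by linarith) (by positivity)
  have eq2 : p * u * (1 + c * v) = 1 := by
    rw [hv]; field_simp; ring
  have hX : (0:ℝ) < c * p^2 * u^2 := by positivity
  have eq1 : r * (1 - u) * (u - a) = (1 + c * v) * v := by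
    have h : (1 + c * v) * v * (c * p^2 * u^2) = 1 - p*u := by
      rw [hv]; field_simp; ring
    have h2 : r*(1-u)*(u-a) * (c*p^2*u^2) = 1 - p*u := by
      linear_combination hfu'
    exact mul_right_cancel₀ (ne_of_gt hX) (h2.trans h.symm)
  refine ⟨u, v, hu0, hv0, eq1, eq2, hua, hub, ?_⟩
  intro u' v' hu' hv' he1 he2
  have hpu' : p * u' < 1 := by
    nlinarith [mul_pos (mul_pos hp0 hu') (mul_pos hc hv')]
  have hu'1 : u' < 1 := by
    nlinarith [mul_pos (show (0:ℝ) < p - 1 by linarith) hu']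
  have hposv : 0 < (1 + c * v') * v' :=
    mul_pos (by nlinarith [mul_pos hc hv']) hv'
  have h5 : 0 < r * (1 - u') * (u' - a) := he1 ▸ hposv
  have hu'a : a < u' := by
    nlinarith [mul_pos hr (show (0:ℝ) < 1 - u' by linarith)]
  have hf' : c*r*p^2*u'^2*(1-u')*(u'-a) + (p*u' - 1) = 0 := by
    linear_combination (c*p^2*u'^2) * he1 + (c*p*u'*v' + 1) * he2
  have huu : u' = u :=
    uniq_u r c p a u' u hr hc ha0 ha1 hcr hp1 hu'a hpu' hua hpu hf' hfu'
  refine ⟨huu, ?_⟩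
  have heq : p * u * (1 + c * v') = 1 := by rw [← huu]; exact he2
  have hne : p * u ≠ 0 := by positivity
  have h3 : 1 + c * v' = 1 + c * v := mul_left_cancel₀ hne (heq.trans eq2.symm)
  have h4 : c * v' = c * v := by linarith
  exact mul_left_cancel₀ hcne h4
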